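/- Let c0 be the Banach space of real sequences converging to 0 with the supremum norm. Then the identity map on the unit sphere S_{(c0)*} of its dual, from the relative weak-* topology σ((c0)*, c0) to the relative weak topology σ((c0)*, (c0)**), is continuous; equivalently, every net in S_{(c0)*} that converges weak-* to a point of S_{(c0)*} converges weakly to that point. -/

import Mathlib

open NormedSpace Filter Topology ZeroAtInfty

noncomputable section

namespace Stmt8Aux

/-- The `n`-th coordinate vector in `c₀`. -/
def e (n : ℕ) : C₀(ℕ, ℝ) where
  toFun := Pi.single n 1
  continuous_toFun := continuous_of_discreteTopology
  zero_at_infty' := by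
    rw [Filter.cocompact_eq_cofinite]
    refine Tendsto.congr' ?_ tendsto_const_nhds
    filter_upwards [Filter.eventually_cofinite_ne n] with m hm
    simp [Pi.single_apply, hm]

@[simp] lemma e_apply (n m : ℕ) : e n m = if m = n then 1 else 0 := by
  simp [e, Pi.single_apply]

lemma sum_apply (F : Finset ℕ) (f : ℕ → C₀(ℕ, ℝ)) (m : ℕ) :
    (∑ n ∈ F, f n) m = ∑ n ∈ F, f n m := by
  classical
  induction F using Finset.induction with
  | empty => simp
  | insert _ _ h ih => simp_all [Finset.sum_insert h]

lemma abs_apply_le (f : C₀(ℕ, ℝ)) (n : ℕ) : |f n| ≤ ‖f‖ := by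
  rw [← ZeroAtInftyContinuousMap.norm_toBCF_eq_norm]
  simpa [Real.norm_eq_abs] using f.toBCF.norm_coe_le_norm n

lemma norm_le_of_forall {f : C₀(ℕ, ℝ)} {C : ℝ} (hC : 0 ≤ C) (h : ∀ n, |f n| ≤ C) :
    ‖f‖ ≤ C := by
  rw [← ZeroAtInftyContinuousMap.norm_toBCF_eq_norm]
  refine (BoundedContinuousFunction.norm_le hC).2 fun n => ?_
  simpa [Real.norm_eq_abs] using h n

/-- Key lemma: the coordinate masses on `F` plus the action on a vector supported off `F`
is at most the norm. -/
lemma key (f : StrongDual ℝ C₀(ℕ, ℝ)) (F : Finset ℕ) (x : C₀(ℕ, ℝ)) (hx : ‖x‖ ≤ 1)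
    (hx0 : ∀ n ∈ F, x n = 0) :
    (∑ n ∈ F, |f (e n)|) + f x ≤ ‖f‖ := by
  classical
  set s : ℕ → ℝ := fun n => if 0 ≤ f (e n) then 1 else -1 with hs
  set y : C₀(ℕ, ℝ) := (∑ n ∈ F, s n • e n) + x with hy
  have hyval : ∀ m, y m = (if m ∈ F then s m else 0) + x m := by
    intro m
    simp only [hy, ZeroAtInftyContinuousMap.coe_add, Pi.add_apply]
    congr 1
    rw [sum_apply]
    have h1 : ∀ n ∈ F, (s n • e n) m = if n = m then s n else 0 := by
      intro n _
      by_cases hnm : n = m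
      · subst hnm; simp
      · have hmn : m ≠ n := fun hc => hnm hc.symm
        simp [hnm, hmn]
    rw [Finset.sum_congr rfl h1, Finset.sum_ite_eq' F m s]
  have hsabs : ∀ n, |s n| = 1 := by
    intro n; rw [hs]; dsimp only; split_ifs <;> norm_num
  have hy1 : ‖y‖ ≤ 1 := by
    refine norm_le_of_forall zero_le_one fun m => ?_
    rw [hyval m]
    by_cases hm : m ∈ F
    · simp [hm, hx0 m hm, hsabs m]
    · simpa [hm] using (abs_apply_le x m).trans hx
  have hfy : f y = (∑ n ∈ F, |f (e n)|) + f x := by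
    have : ∀ n ∈ F, s n * f (e n) = |f (e n)| := by
      intro n _
      rw [hs]; dsimp only
      rcases le_or_gt 0 (f (e n)) with h | h
      · rw [if_pos h, one_mul, abs_of_nonneg h]
      · rw [if_neg (not_le.2 h), neg_one_mul, abs_of_neg h]
    rw [hy, map_add, map_sum]
    simp only [map_smul, smul_eq_mul]
    rw [Finset.sum_congr rfl this]
  calc (∑ n ∈ F, |f (e n)|) + f x = f y := hfy.symm
    _ ≤ |f y| := le_abs_self _
    _ ≤ ‖f‖ * ‖y‖ := f.le_opNorm y
    _ ≤ ‖f‖ * 1 := mul_le_mul_of_nonneg_left hy1 (norm_nonneg f)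
    _ = ‖f‖ := mul_one _

lemma key_abs (f : StrongDual ℝ C₀(ℕ, ℝ)) (F : Finset ℕ) (x : C₀(ℕ, ℝ)) (hx : ‖x‖ ≤ 1)
    (hx0 : ∀ n ∈ F, x n = 0) :
    |f x| ≤ ‖f‖ - ∑ n ∈ F, |f (e n)| := by
  rw [abs_le]
  constructor
  · have := key f F (-x) (by simpa using hx) (fun n hn => by simp [hx0 n hn])
    rw [map_neg] at this; linarith
  · have := key f F x hx hx0
    linarith

lemma sum_le_norm (f : StrongDual ℝ C₀(ℕ, ℝ)) (F : Finset ℕ) :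
    (∑ n ∈ F, |f (e n)|) ≤ ‖f‖ := by
  have := key f F 0 (by simp) (by simp)
  simpa using this

/-- The truncation of `x` off `F`. -/
lemma exists_finset (g : StrongDual ℝ C₀(ℕ, ℝ)) {ε : ℝ} (hε : 0 < ε) :
    ∃ F : Finset ℕ, ‖g‖ - ε < ∑ n ∈ F, |g (e n)| := by
  classical
  rcases lt_or_ge (‖g‖ - ε) 0 with h | h
  · exact ⟨∅, by simpa using h⟩
  have hg2 : ‖g‖ - ε / 2 < ‖g‖ := by linarith
  obtain ⟨x, hx1, hx2⟩ := g.exists_lt_apply_of_lt_opNorm hg2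
  set δ : ℝ := ε / (2 * (‖g‖ + 1)) with hδ
  have hδpos : 0 < δ := by positivity
  have hfin : {m | ¬ |x m| < δ}.Finite := by
    have := x.zero_at_infty'
    rw [Filter.cocompact_eq_cofinite] at this
    have h2 := Metric.tendsto_nhds.1 this δ hδpos
    simpa [Real.dist_eq, Filter.eventually_cofinite] using h2
  set F : Finset ℕ := hfin.toFinset with hF
  refine ⟨F, ?_⟩
  set xF : C₀(ℕ, ℝ) := ∑ n ∈ F, x n • e n with hxF
  set xR : C₀(ℕ, ℝ) := x - xF with hxR
  have hxFval : ∀ m, xF m = if m ∈ F then x m else 0 := by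
    intro m
    rw [hxF, sum_apply]
    have h1 : ∀ n ∈ F, (x n • e n) m = if n = m then x n else 0 := by
      intro n _
      by_cases hnm : n = m
      · subst hnm; simp
      · have hmn : m ≠ n := fun hc => hnm hc.symm
        simp [hnm, hmn]
    rw [Finset.sum_congr rfl h1, Finset.sum_ite_eq' F m]
  have hxRval : ∀ m, xR m = if m ∈ F then 0 else x m := by
    intro m
    rw [hxR]
    simp only [ZeroAtInftyContinuousMap.coe_sub, Pi.sub_apply, hxFval m]
    split_ifs <;> ring
  have hxRnorm : ‖xR‖ ≤ δ := by
    refine norm_le_of_forall hδpos.le fun m => ?_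
    rw [hxRval m]
    by_cases hm : m ∈ F
    · simp [hm, hδpos.le]
    · rw [if_neg hm]
      have : m ∉ {m | ¬ |x m| < δ} := by simpa [hF] using hm
      simp only [Set.mem_setOf_eq, not_not] at this
      exact this.le
  have hgxR : |g xR| ≤ ‖g‖ * δ := by
    calc |g xR| = ‖g xR‖ := (Real.norm_eq_abs _).symm
      _ ≤ ‖g‖ * ‖xR‖ := g.le_opNorm xR
      _ ≤ ‖g‖ * δ := by gcongr
  have hgxF : |g xF| ≤ ∑ n ∈ F, |g (e n)| := by
    rw [hxF, map_sum]
    refine (Finset.abs_sum_le_sum_abs _ _).trans ?_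
    refine Finset.sum_le_sum fun n _ => ?_
    rw [map_smul, smul_eq_mul, abs_mul]
    have hxn : |x n| ≤ 1 := (abs_apply_le x n).trans hx1.le
    nlinarith [abs_nonneg (g (e n)), abs_nonneg (x n)]
  have hsplit : g x = g xF + g xR := by rw [hxR, map_sub]; ring
  have hgx : |g x| ≤ (∑ n ∈ F, |g (e n)|) + ‖g‖ * δ := by
    rw [hsplit]
    exact (abs_add_le _ _).trans (add_le_add hgxF hgxR)
  have hδsmall : ‖g‖ * δ ≤ ε / 2 := by
    have h1 : ‖g‖ * δ = (‖g‖ * ε) / (2 * (‖g‖ + 1)) := by rw [hδ]; ring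
    rw [h1, div_le_div_iff₀ (by positivity) (by norm_num : (0:ℝ) < 2)]
    nlinarith [norm_nonneg g, hε.le]
  have : ‖g‖ - ε / 2 < |g x| := by
    calc ‖g‖ - ε / 2 < ‖g x‖ := hx2
      _ = |g x| := Real.norm_eq_abs _
  linarith

end Stmt8Aux

open Stmt8Aux

set_option maxHeartbeats 1000000 in
/-- The identity map on the unit sphere of `(c₀)*`, from the relative
weak-* topology `σ((c₀)*, c₀)` to the relative weak topology, is continuous. -/
theorem stmt_8 :
    ContinuousOn
      (fun g : WeakDual ℝ C₀(ℕ, ℝ) =>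
        toWeakSpace ℝ (StrongDual ℝ C₀(ℕ, ℝ)) (WeakDual.toStrongDual g))
      {g : WeakDual ℝ C₀(ℕ, ℝ) | ‖WeakDual.toStrongDual g‖ = 1} := by
  classical
  set S := {g : WeakDual ℝ C₀(ℕ, ℝ) | ‖WeakDual.toStrongDual g‖ = 1} with hS
  -- It suffices to prove continuity into the norm topology
  have main : ContinuousOn (fun g : WeakDual ℝ C₀(ℕ, ℝ) =>
      (WeakDual.toStrongDual g : StrongDual ℝ C₀(ℕ, ℝ))) S := by
    intro g₀ hg₀
    rw [ContinuousWithinAt]; refine (Metric.tendsto_nhds (α := StrongDual ℝ C₀(ℕ, ℝ))).mpr ?_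
    intro ε hε
    set G₀ : StrongDual ℝ C₀(ℕ, ℝ) := WeakDual.toStrongDual g₀ with hG₀
    have hg₀n : ‖G₀‖ = 1 := hg₀
    obtain ⟨F, hF⟩ := exists_finset G₀ (by positivity : (0:ℝ) < ε/3)
    rw [hg₀n] at hF
    -- the weak-* open neighborhood
    set φ : WeakDual ℝ C₀(ℕ, ℝ) → ℝ := fun h => ∑ n ∈ F, |h (e n) - G₀ (e n)| with hφ
    set ψ : WeakDual ℝ C₀(ℕ, ℝ) → ℝ := fun h => ∑ n ∈ F, |h (e n)| with hψ
    have hφc : Continuous φ := by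
      refine continuous_finset_sum _ fun n _ => ?_
      exact ((WeakDual.eval_continuous (e n)).sub continuous_const).abs
    have hψc : Continuous ψ := by
      refine continuous_finset_sum _ fun n _ => ?_
      exact (WeakDual.eval_continuous (e n)).abs
    have hψg₀ : ψ g₀ = ∑ n ∈ F, |G₀ (e n)| := rfl
    have hV : ∀ᶠ h in 𝓝 g₀, φ h < ε/3 ∧ 1 - ε/3 < ψ h := by
      have h1 : ∀ᶠ h in 𝓝 g₀, φ h < ε/3 := by
        refine (hφc.continuousAt (x := g₀)).eventually_lt continuousAt_const ?_
        have : φ g₀ = 0 := by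
          rw [hφ]
          exact Finset.sum_eq_zero fun n _ => by simp [hG₀]
        rw [this]; positivity
      have h2 : ∀ᶠ h in 𝓝 g₀, 1 - ε/3 < ψ h := by
        refine continuousAt_const.eventually_lt (hψc.continuousAt (x := g₀)) ?_
        rw [hψg₀]; exact hF
      exact h1.and h2
    filter_upwards [mem_nhdsWithin_of_mem_nhds hV, self_mem_nhdsWithin] with h hh hhS
    obtain ⟨hh1, hh2⟩ := hh
    set H : StrongDual ℝ C₀(ℕ, ℝ) := WeakDual.toStrongDual h with hH
    have hhn : ‖H‖ = 1 := hhS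
    refine lt_of_eq_of_lt (dist_eq_norm (WeakDual.toStrongDual h) (WeakDual.toStrongDual g₀)) ?_
    have hψh : ψ h = ∑ n ∈ F, |H (e n)| := rfl
    have hφh : φ h = ∑ n ∈ F, |H (e n) - G₀ (e n)| := rfl
    -- bound the norm of the difference
    have hψle : ψ h ≤ 1 := by
      rw [hψh, ← hhn]; exact sum_le_norm H F
    have hφnn : 0 ≤ φ h := Finset.sum_nonneg fun n _ => abs_nonneg _
    have hbound : ‖H - G₀‖ ≤ φ h + (1 - ψ h) + ε/3 := by
      have hM : (0:ℝ) ≤ φ h + (1 - ψ h) + ε/3 := by linarith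
      refine ContinuousLinearMap.opNorm_le_of_unit_norm hM ?_
      intro x hx
      set xF : C₀(ℕ, ℝ) := ∑ n ∈ F, x n • e n with hxF
      set xR : C₀(ℕ, ℝ) := x - xF with hxR
      have hxRval : ∀ m, xR m = if m ∈ F then 0 else x m := by
        intro m
        have hxFval : xF m = if m ∈ F then x m else 0 := by
          rw [hxF, sum_apply]
          have h1 : ∀ n ∈ F, (x n • e n) m = if n = m then x n else 0 := by
            intro n _
            by_cases hnm : n = m
            · subst hnm; simp
            · have hmn : m ≠ n := fun hc => hnm hc.symm
              simp [hnm, hmn]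
          rw [Finset.sum_congr rfl h1, Finset.sum_ite_eq' F m]
        rw [hxR]
        simp only [ZeroAtInftyContinuousMap.coe_sub, Pi.sub_apply, hxFval]
        split_ifs <;> ring
      have hxR0 : ∀ n ∈ F, xR n = 0 := fun n hn => by rw [hxRval n, if_pos hn]
      have hxRnorm : ‖xR‖ ≤ 1 := by
        refine norm_le_of_forall zero_le_one fun m => ?_
        rw [hxRval m]
        split_ifs
        · simp
        · exact (abs_apply_le x m).trans hx.le
      have hdxF : |(H - G₀) xF| ≤ φ h := by
        rw [hxF, map_sum, hφh]
        refine (Finset.abs_sum_le_sum_abs _ _).trans ?_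
        refine Finset.sum_le_sum fun n _ => ?_
        rw [map_smul, smul_eq_mul, abs_mul, ContinuousLinearMap.sub_apply]
        have hxn : |x n| ≤ 1 := (abs_apply_le x n).trans hx.le
        nlinarith [abs_nonneg (H (e n) - G₀ (e n)), abs_nonneg (x n)]
      have hhxR : |H xR| ≤ 1 - ψ h := by
        have := key_abs H F xR hxRnorm hxR0
        rw [hhn] at this
        rw [hψh]; exact this
      have hg₀xR : |G₀ xR| ≤ ε/3 := by
        have := key_abs G₀ F xR hxRnorm hxR0
        rw [hg₀n] at this
        have h2 : 1 - ε/3 < ∑ n ∈ F, |G₀ (e n)| := hF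
        linarith
      have hsplit : (H - G₀) x = (H - G₀) xF + H xR - G₀ xR := by
        have hxs : x = xF + xR := by rw [hxR]; abel
        rw [ContinuousLinearMap.sub_apply, ContinuousLinearMap.sub_apply, hxs,
          map_add, map_add]
        ring
      rw [Real.norm_eq_abs, hsplit]
      calc |(H - G₀) xF + H xR - G₀ xR|
          ≤ |(H - G₀) xF| + |H xR| + |G₀ xR| :=
            (abs_sub _ _).trans (add_le_add_left (abs_add_le _ _) _)
        _ ≤ φ h + (1 - ψ h) + ε/3 := add_le_add (add_le_add hdxF hhxR) hg₀xR
    have : ‖WeakDual.toStrongDual h - WeakDual.toStrongDual g₀‖ = ‖H - G₀‖ := rfl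
    rw [this]
    calc ‖H - G₀‖ ≤ φ h + (1 - ψ h) + ε/3 := hbound
      _ < ε/3 + ε/3 + ε/3 := by linarith
      _ = ε := by ring
  -- compose with the (norm-to-weak) continuous identity
  have : (fun g : WeakDual ℝ C₀(ℕ, ℝ) =>
      toWeakSpace ℝ (StrongDual ℝ C₀(ℕ, ℝ)) (WeakDual.toStrongDual g))
      = (toWeakSpaceCLM ℝ (StrongDual ℝ C₀(ℕ, ℝ))) ∘
        (fun g : WeakDual ℝ C₀(ℕ, ℝ) => (WeakDual.toStrongDual g : StrongDual ℝ C₀(ℕ, ℝ))) := by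
    funext g
    simp [Function.comp, toWeakSpaceCLM_eq_toWeakSpace]
  rw [this]
  exact (toWeakSpaceCLM ℝ (StrongDual ℝ C₀(ℕ, ℝ))).continuous.comp_continuousOn main
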